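/- Let Δ be a simplicial complex and let k > p > 0 be integers. Suppose that f_{p-1}(Δ) > 0. Then f_{p-1}(Δ) > ((k!)^{p/k} / p!) · (f_{k-1}(Δ))^{p/k}, where all quantities are interpreted as real numbers. -/

import Mathlib

/-- The number of faces of `Δ` with exactly `i` vertices (i.e. `f_{i-1}(Δ)`). -/
def faceCount {V : Type*} [DecidableEq V] (Δ : Finset (Finset V)) (i : ℕ) : ℕ :=
  (Δ.filter fun s => s.card = i).card

namespace KKaux

variable {V : Type*} [DecidableEq V]

/-- Downward closedness. -/
def IsCx (Δ : Finset (Finset V)) : Prop := ∀ B ∈ Δ, ∀ A ⊆ B, A ∈ Δ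

/-- The link of a vertex. -/
def lk (Δ : Finset (Finset V)) (x : V) : Finset (Finset V) :=
  Δ.filter fun F => x ∉ F ∧ insert x F ∈ Δ

lemma lk_isCx {Δ : Finset (Finset V)} (h : IsCx Δ) (x : V) : IsCx (lk Δ x) := by
  intro B hB A hAB
  simp only [lk, Finset.mem_filter] at hB ⊢
  obtain ⟨hBΔ, hxB, hiB⟩ := hB
  exact ⟨h B hBΔ A hAB, fun hxA => hxB (hAB hxA),
    h _ hiB _ (Finset.insert_subset_insert _ hAB)⟩

lemma faceCount_pos_down {Δ : Finset (Finset V)} (h : IsCx Δ) {j : ℕ}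
    (hp : 0 < faceCount Δ (j + 1)) : 0 < faceCount Δ j := by
  simp only [faceCount] at hp ⊢
  rw [Finset.card_pos] at hp ⊢
  obtain ⟨G, hG⟩ := hp
  rw [Finset.mem_filter] at hG
  obtain ⟨A, hAG, hA⟩ := Finset.exists_subset_card_eq (n := j) (s := G) (by omega)
  exact ⟨A, Finset.mem_filter.2 ⟨h G hG.1 A hAG, hA⟩⟩

lemma faceCount_pos_add {Δ : Finset (Finset V)} (h : IsCx Δ) (i : ℕ) :
    ∀ d : ℕ, 0 < faceCount Δ (i + d) → 0 < faceCount Δ i := by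
  intro d
  induction d with
  | zero => intro hp; simpa using hp
  | succ n ih =>
    intro hp
    apply ih
    apply faceCount_pos_down h
    have e : i + n + 1 = i + (n + 1) := by omega
    rwa [e]

lemma faceCount_pos_le {Δ : Finset (Finset V)} (h : IsCx Δ) {i j : ℕ} (hij : i ≤ j)
    (hp : 0 < faceCount Δ j) : 0 < faceCount Δ i := by
  obtain ⟨d, rfl⟩ := Nat.exists_eq_add_of_le hij
  exact faceCount_pos_add h i d hp

lemma faceCount_lk {Δ : Finset (Finset V)} (h : IsCx Δ) (x : V) (j : ℕ) :
    faceCount (lk Δ x) j = (Δ.filter fun G => G.card = j + 1 ∧ x ∈ G).card := by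
  simp only [faceCount]
  refine Finset.card_bij' (fun F _ => insert x F) (fun G _ => G.erase x) ?_ ?_ ?_ ?_
  · intro F hF
    simp only [lk, Finset.mem_filter, Finset.filter_filter] at hF ⊢
    obtain ⟨hFΔ, ⟨hxF, hins⟩, hcard⟩ := hF
    exact ⟨hins, by rw [Finset.card_insert_of_notMem hxF, hcard], Finset.mem_insert_self _ _⟩
  · intro G hG
    simp only [lk, Finset.mem_filter, Finset.filter_filter] at hG ⊢
    obtain ⟨hGΔ, hcard, hxG⟩ := hG
    refine ⟨h G hGΔ _ (Finset.erase_subset _ _), ⟨Finset.notMem_erase _ _, ?_⟩, ?_⟩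
    · rw [Finset.insert_erase hxG]; exact hGΔ
    · rw [Finset.card_erase_of_mem hxG, hcard]; rfl
  · intro F hF
    simp only [lk, Finset.mem_filter, Finset.filter_filter] at hF
    exact Finset.erase_insert hF.2.1.1
  · intro G hG
    simp only [Finset.mem_filter] at hG
    exact Finset.insert_erase hG.2.2

lemma sum_lk {Δ : Finset (Finset V)} (h : IsCx Δ) (j : ℕ) :
    ∑ x ∈ Δ.sup id, faceCount (lk Δ x) j = (j + 1) * faceCount Δ (j + 1) := by
  have key : ∀ x ∈ Δ.sup id, faceCount (lk Δ x) j
      = ∑ G ∈ Δ.filter (fun G => G.card = j + 1), if x ∈ G then 1 else 0 := by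
    intro x _
    rw [faceCount_lk h x j, ← Finset.filter_filter, Finset.card_filter]
  rw [Finset.sum_congr rfl key, Finset.sum_comm]
  have inner : ∀ G ∈ Δ.filter (fun G => G.card = j + 1),
      (∑ x ∈ Δ.sup id, if x ∈ G then 1 else 0) = j + 1 := by
    intro G hG
    rw [Finset.mem_filter] at hG
    rw [← Finset.card_filter]
    have hsub : G ⊆ Δ.sup id := by
      simpa using Finset.le_sup (f := id) hG.1
    have heq : (Δ.sup id).filter (fun x => x ∈ G) = G := by
      ext y
      simp only [Finset.mem_filter]
      exact ⟨fun hy => hy.2, fun hy => ⟨hsub hy, hy⟩⟩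
    rw [heq, hG.2]
  rw [Finset.sum_congr rfl inner, Finset.sum_const]
  simp [faceCount, Nat.mul_comm]

/-- `sN Δ j = j! * f_j` is the number of ordered `j`-faces. -/
def sN (Δ : Finset (Finset V)) (j : ℕ) : ℕ := j.factorial * faceCount Δ j

lemma sum_lk_sN {Δ : Finset (Finset V)} (h : IsCx Δ) (j : ℕ) :
    ∑ x ∈ Δ.sup id, sN (lk Δ x) j = sN Δ (j + 1) := by
  simp only [sN, ← Finset.mul_sum, sum_lk h j, Nat.factorial_succ]
  ring

lemma lk_lt {Δ : Finset (Finset V)} (h : IsCx Δ) (x : V) {j : ℕ} (hj : 1 ≤ j)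
    (hpos : 0 < faceCount (lk Δ x) j) : faceCount (lk Δ x) j < faceCount Δ j := by
  simp only [faceCount] at hpos ⊢
  apply Finset.card_lt_card
  rw [Finset.card_pos] at hpos
  obtain ⟨F, hF⟩ := hpos
  simp only [lk, Finset.mem_filter, Finset.filter_filter] at hF
  obtain ⟨hFΔ, ⟨hxF, hins⟩, hcard⟩ := hF
  constructor
  · exact Finset.filter_subset_filter _ (Finset.filter_subset _ _)
  · intro hsub
    obtain ⟨y, hy⟩ : F.Nonempty := Finset.card_pos.1 (by omega)
    have hxy : x ≠ y := fun hxy => hxF (hxy ▸ hy)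
    set G := (insert x F).erase y with hGdef
    have hGΔ : G ∈ Δ := h _ hins _ (Finset.erase_subset _ _)
    have hyF : y ∈ insert x F := Finset.mem_insert_of_mem hy
    have hGcard : G.card = j := by
      rw [hGdef, Finset.card_erase_of_mem hyF, Finset.card_insert_of_notMem hxF, hcard]
      omega
    have hxG : x ∈ G := Finset.mem_erase.2 ⟨hxy, Finset.mem_insert_self _ _⟩
    have hGmem : G ∈ Δ.filter (fun s => s.card = j) := Finset.mem_filter.2 ⟨hGΔ, hGcard⟩
    have hmem := hsub hGmem
    simp only [lk, Finset.mem_filter, Finset.filter_filter] at hmem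
    exact hmem.2.1.1 hxG

lemma sN_pos_down {Δ : Finset (Finset V)} (h : IsCx Δ) {j : ℕ}
    (hp : 0 < sN Δ (j + 1)) : 0 < sN Δ j := by
  have hf : 0 < faceCount Δ (j + 1) := by
    rcases Nat.eq_zero_or_pos (faceCount Δ (j + 1)) with h0 | h0
    · simp [sN, h0] at hp
    · exact h0
  exact Nat.mul_pos (Nat.factorial_pos _) (faceCount_pos_down h hf)

/-- The key inductive step. -/
lemma Mstep (i : ℕ)
    (IH : ∀ Γ : Finset (Finset V), IsCx Γ → 0 < sN Γ (i + 1) →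
      sN Γ (i + 1) ^ i ≤ sN Γ i ^ (i + 1))
    (Δ : Finset (Finset V)) (hΔ : IsCx Δ) :
    sN Δ (i + 2) ^ (i + 1) + sN Δ (i + 1) ^ (i + 1) ≤ sN Δ (i + 1) ^ (i + 2) := by
  by_cases hz : sN Δ (i + 1) = 0
  · have hf1 : faceCount Δ (i + 1) = 0 := by
      rcases Nat.mul_eq_zero.1 hz with h0 | h0
      · exact absurd h0 (Nat.factorial_ne_zero _)
      · exact h0
    have hf2 : faceCount Δ (i + 2) = 0 := by
      by_contra hc
      exact absurd (faceCount_pos_down hΔ (Nat.pos_of_ne_zero hc)) (by omega)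
    have z1 : (0 : ℕ) ^ (i + 1) = 0 := Nat.zero_pow (by omega)
    have z2 : (0 : ℕ) ^ (i + 2) = 0 := Nat.zero_pow (by omega)
    simp only [sN, hf1, hf2, Nat.mul_zero, z1, z2]
    omega
  · have hs1 : 1 ≤ sN Δ (i + 1) := Nat.pos_of_ne_zero hz
    set K : ℝ := (sN Δ (i + 1) : ℝ) - 1 with hK
    have hK0 : 0 ≤ K := by
      rw [hK]
      have h1 : (1 : ℝ) ≤ (sN Δ (i + 1) : ℝ) := by exact_mod_cast hs1
      linarith
    have hptw : ∀ x ∈ Δ.sup id, (sN (lk Δ x) (i + 1) : ℝ)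
        ≤ K ^ ((i + 1 : ℕ) : ℝ)⁻¹ * (sN (lk Δ x) i : ℝ) := by
      intro x _
      by_cases ha : sN (lk Δ x) (i + 1) = 0
      · rw [ha]
        simp only [Nat.cast_zero]
        exact mul_nonneg (Real.rpow_nonneg hK0 _) (by positivity)
      · have hapos : 0 < sN (lk Δ x) (i + 1) := Nat.pos_of_ne_zero ha
        have hlkcx := lk_isCx hΔ x
        have hfpos : 0 < faceCount (lk Δ x) (i + 1) := by
          rcases Nat.eq_zero_or_pos (faceCount (lk Δ x) (i + 1)) with h0 | h0
          · simp [sN, h0] at hapos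
          · exact h0
        have hlt : faceCount (lk Δ x) (i + 1) + 1 ≤ faceCount Δ (i + 1) :=
          Nat.succ_le_of_lt (lk_lt hΔ x (by omega) hfpos)
        have hstep : sN (lk Δ x) (i + 1) + 1 ≤ sN Δ (i + 1) := by
          calc sN (lk Δ x) (i + 1) + 1
              = (i + 1).factorial * faceCount (lk Δ x) (i + 1) + 1 := rfl
            _ ≤ (i + 1).factorial * faceCount (lk Δ x) (i + 1) + (i + 1).factorial :=
                Nat.add_le_add_left (Nat.one_le_iff_ne_zero.2 (Nat.factorial_ne_zero _)) _
            _ = (i + 1).factorial * (faceCount (lk Δ x) (i + 1) + 1) := by ring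
            _ ≤ (i + 1).factorial * faceCount Δ (i + 1) := Nat.mul_le_mul_left _ hlt
            _ = sN Δ (i + 1) := rfl
        have haK : (sN (lk Δ x) (i + 1) : ℝ) ≤ K := by
          have hcast : (sN (lk Δ x) (i + 1) : ℝ) + 1 ≤ (sN Δ (i + 1) : ℝ) := by
            exact_mod_cast hstep
          rw [hK]
          linarith
        have hIH : sN (lk Δ x) (i + 1) ^ i ≤ sN (lk Δ x) i ^ (i + 1) :=
          IH (lk Δ x) hlkcx hapos
        have hpowle : (sN (lk Δ x) (i + 1) : ℝ) ^ (i + 1)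
            ≤ K * (sN (lk Δ x) i : ℝ) ^ (i + 1) := by
          have h2 : ((sN (lk Δ x) (i + 1) : ℝ)) ^ i ≤ ((sN (lk Δ x) i : ℝ)) ^ (i + 1) := by
            exact_mod_cast hIH
          have h3 : (0 : ℝ) ≤ (sN (lk Δ x) (i + 1) : ℝ) ^ i := by positivity
          have h4 := mul_le_mul haK h2 h3 hK0
          calc (sN (lk Δ x) (i + 1) : ℝ) ^ (i + 1)
              = (sN (lk Δ x) (i + 1) : ℝ) * (sN (lk Δ x) (i + 1) : ℝ) ^ i := by ring
            _ ≤ K * (sN (lk Δ x) i : ℝ) ^ (i + 1) := h4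
        have hroot := Real.rpow_le_rpow (by positivity) hpowle
          (by positivity : (0 : ℝ) ≤ ((i + 1 : ℕ) : ℝ)⁻¹)
        rwa [Real.pow_rpow_inv_natCast (by positivity) (Nat.succ_ne_zero i),
          Real.mul_rpow hK0 (by positivity),
          Real.pow_rpow_inv_natCast (by positivity) (Nat.succ_ne_zero i)] at hroot
    have hsum2 : (sN Δ (i + 2) : ℝ) = ∑ x ∈ Δ.sup id, (sN (lk Δ x) (i + 1) : ℝ) := by
      exact_mod_cast congrArg (Nat.cast : ℕ → ℝ) (sum_lk_sN hΔ (i + 1)).symm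
    have hsum1 : (sN Δ (i + 1) : ℝ) = ∑ x ∈ Δ.sup id, (sN (lk Δ x) i : ℝ) := by
      exact_mod_cast congrArg (Nat.cast : ℕ → ℝ) (sum_lk_sN hΔ i).symm
    have hbound : (sN Δ (i + 2) : ℝ) ≤ K ^ ((i + 1 : ℕ) : ℝ)⁻¹ * (sN Δ (i + 1) : ℝ) := by
      rw [hsum2, hsum1, Finset.mul_sum]
      exact Finset.sum_le_sum hptw
    have hfinal : (sN Δ (i + 2) : ℝ) ^ (i + 1) ≤ K * (sN Δ (i + 1) : ℝ) ^ (i + 1) := by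
      calc (sN Δ (i + 2) : ℝ) ^ (i + 1)
          ≤ (K ^ ((i + 1 : ℕ) : ℝ)⁻¹ * (sN Δ (i + 1) : ℝ)) ^ (i + 1) :=
            pow_le_pow_left₀ (by positivity) hbound _
        _ = (K ^ ((i + 1 : ℕ) : ℝ)⁻¹) ^ (i + 1) * (sN Δ (i + 1) : ℝ) ^ (i + 1) := by
            rw [mul_pow]
        _ = K * (sN Δ (i + 1) : ℝ) ^ (i + 1) := by
            rw [Real.rpow_inv_natCast_pow hK0 (Nat.succ_ne_zero i)]
    have hgoal : (sN Δ (i + 2) : ℝ) ^ (i + 1) + (sN Δ (i + 1) : ℝ) ^ (i + 1)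
        ≤ (sN Δ (i + 1) : ℝ) ^ (i + 2) := by
      have hKs : K * (sN Δ (i + 1) : ℝ) ^ (i + 1)
          = (sN Δ (i + 1) : ℝ) ^ (i + 2) - (sN Δ (i + 1) : ℝ) ^ (i + 1) := by
        rw [hK]; ring
      linarith [hfinal]
    exact_mod_cast hgoal

lemma M (i : ℕ) : ∀ Δ : Finset (Finset V), IsCx Δ →
    sN Δ (i + 2) ^ (i + 1) + sN Δ (i + 1) ^ (i + 1) ≤ sN Δ (i + 1) ^ (i + 2) := by
  induction i with
  | zero =>
    intro Δ hΔ
    apply Mstep 0 _ Δ hΔ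
    intro Γ hΓ hpos
    have hd := sN_pos_down hΓ hpos
    simp only [pow_zero, Nat.zero_add, pow_one]
    omega
  | succ n ih =>
    intro Δ hΔ
    apply Mstep (n + 1) _ Δ hΔ
    intro Γ hΓ _
    have h := ih Γ hΓ
    have e : n + 2 = n + 1 + 1 := by omega
    rw [e] at h
    exact le_trans (Nat.le_add_right _ _) h

lemma chain {Δ : Finset (Finset V)} (hΔ : IsCx Δ) {p k : ℕ} (hp : 0 < p) (hpk : p < k)
    (hfk : 0 < faceCount Δ k) : sN Δ k ^ p < sN Δ p ^ k := by
  revert hfk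
  induction k, hpk using Nat.le_induction with
  | base =>
    intro hfk
    obtain ⟨q, rfl⟩ := Nat.exists_eq_succ_of_ne_zero (Nat.pos_iff_ne_zero.1 hp)
    have hM := M q Δ hΔ
    have e2 : q + 2 = q + 1 + 1 := by omega
    rw [e2] at hM
    have hfp : 0 < faceCount Δ (q + 1) := faceCount_pos_le hΔ (by omega) hfk
    have hsp : 0 < sN Δ (q + 1) := Nat.mul_pos (Nat.factorial_pos _) hfp
    have h1 : 0 < sN Δ (q + 1) ^ (q + 1) := Nat.pow_pos hsp
    exact Nat.lt_of_lt_of_le (Nat.lt_add_of_pos_right h1) hM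
  | succ k hk ih =>
    intro hfk
    have hfkk : 0 < faceCount Δ k := faceCount_pos_down hΔ hfk
    have hih := ih hfkk
    obtain ⟨m, rfl⟩ : ∃ m, k = m + 1 := ⟨k - 1, by omega⟩
    have hM := M m Δ hΔ
    have e2 : m + 2 = m + 1 + 1 := by omega
    rw [e2] at hM
    have hMle : sN Δ (m + 1 + 1) ^ (m + 1) ≤ sN Δ (m + 1) ^ (m + 1 + 1) :=
      le_trans (Nat.le_add_right _ _) hM
    rw [← Nat.pow_lt_pow_iff_left (n := m + 1) (Nat.succ_ne_zero m)]
    calc (sN Δ (m + 1 + 1) ^ p) ^ (m + 1) = (sN Δ (m + 1 + 1) ^ (m + 1)) ^ p := by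
          rw [← pow_mul, ← pow_mul, Nat.mul_comm]
      _ ≤ (sN Δ (m + 1) ^ (m + 1 + 1)) ^ p := Nat.pow_le_pow_left hMle p
      _ = (sN Δ (m + 1) ^ p) ^ (m + 1 + 1) := by rw [← pow_mul, ← pow_mul, Nat.mul_comm]
      _ < (sN Δ p ^ (m + 1)) ^ (m + 1 + 1) := Nat.pow_lt_pow_left hih (Nat.succ_ne_zero _)
      _ = (sN Δ p ^ (m + 1 + 1)) ^ (m + 1) := by rw [← pow_mul, ← pow_mul, Nat.mul_comm]

end KKaux

theorem stmt1 {V : Type*} [DecidableEq V] (Δ : Finset (Finset V))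
    (hΔ : ∀ B ∈ Δ, ∀ A ⊆ B, A ∈ Δ)
    (k p : ℕ) (hpk : p < k) (hp : 0 < p)
    (hf : 0 < faceCount Δ p) :
    (faceCount Δ p : ℝ) >
      ((k.factorial : ℝ) ^ ((p : ℝ) / (k : ℝ)) / (p.factorial : ℝ)) *
        (faceCount Δ k : ℝ) ^ ((p : ℝ) / (k : ℝ)) := by
  have hcx : KKaux.IsCx Δ := hΔ
  have hk : 0 < k := lt_trans hp hpk
  by_cases hk0 : faceCount Δ k = 0
  · rw [hk0]
    have hpk0 : (0 : ℝ) < (p : ℝ) / (k : ℝ) :=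
      div_pos (by exact_mod_cast hp) (by exact_mod_cast hk)
    rw [Nat.cast_zero, Real.zero_rpow hpk0.ne']
    have h0 : (0 : ℝ) < (faceCount Δ p : ℝ) := by exact_mod_cast hf
    simpa using h0
  · have hfk : 0 < faceCount Δ k := Nat.pos_of_ne_zero hk0
    have hc := KKaux.chain hcx hp hpk hfk
    set A : ℝ := (k.factorial : ℝ) * (faceCount Δ k : ℝ) with hA
    set B : ℝ := (p.factorial : ℝ) * (faceCount Δ p : ℝ) with hB
    have hA0 : 0 < A := by
      rw [hA]
      exact mul_pos (by exact_mod_cast Nat.factorial_pos k) (by exact_mod_cast hfk)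
    have hB0 : 0 < B := by
      rw [hB]
      exact mul_pos (by exact_mod_cast Nat.factorial_pos p) (by exact_mod_cast hf)
    have hAB : A ^ p < B ^ k := by
      have h := hc
      simp only [KKaux.sN] at h
      rw [hA, hB]
      exact_mod_cast h
    have hkR : ((k : ℕ) : ℝ) ≠ 0 := by
      have : (0 : ℝ) < (k : ℝ) := by exact_mod_cast hk
      exact this.ne'
    have key : (A ^ ((p : ℝ) / (k : ℝ))) ^ k < B ^ k := by
      have h1 : (A ^ ((p : ℝ) / (k : ℝ))) ^ k = A ^ p := by
        rw [← Real.rpow_natCast (A ^ ((p : ℝ) / (k : ℝ))) k, ← Real.rpow_mul hA0.le,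
          div_mul_cancel₀ _ hkR, Real.rpow_natCast]
      rw [h1]
      exact hAB
    have hABr : A ^ ((p : ℝ) / (k : ℝ)) < B := lt_of_pow_lt_pow_left₀ k hB0.le key
    have hrw : ((k.factorial : ℝ) ^ ((p : ℝ) / (k : ℝ)) / (p.factorial : ℝ)) *
        (faceCount Δ k : ℝ) ^ ((p : ℝ) / (k : ℝ))
        = A ^ ((p : ℝ) / (k : ℝ)) / (p.factorial : ℝ) := by
      rw [hA, Real.mul_rpow (by positivity) (by positivity), div_mul_eq_mul_div]
    rw [hrw, gt_iff_lt, div_lt_iff₀ (by exact_mod_cast Nat.factorial_pos p)]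
    calc A ^ ((p : ℝ) / (k : ℝ)) < B := hABr
      _ = (faceCount Δ p : ℝ) * (p.factorial : ℝ) := by rw [hB]; ring
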